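/- Let N ∈ ℕ₊, H a real Hilbert space, x₁,…,x_N elements of a set 𝒳, k a kernel on 𝒳 with RKHS H_k, L : ℝ^N → ℝ≥0 continuous and strictly convex, and λ > 0. Then the regularized problem min_{f ∈ H_k} L(f(x₁),…,f(x_N)) + λ‖f‖_k has a unique minimizer f*, and f* lies in span{k(·,x₁),…,k(·,x_N)}, i.e., f* = ∑_{n=1}^N α_n k(·,x_n) for some α ∈ ℝ^N. -/

import Mathlib

open scoped RealInnerProductSpace

/-- Representer theorem with the (unsquared) RKHS-norm regularizer: for
`L : ℝ^N → ℝ≥0` continuous and strictly convex and `λ > 0`, the problem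
`min_{f ∈ H_k} L(f(x₁),…,f(x_N)) + λ‖f‖ₖ` has a unique minimizer, which lies in
`span{k(·,x₁),…,k(·,x_N)}`. The RKHS of `k` is realized by a feature map `Φ` with dense span,
so that `f(x) = ⟪f, Φ x⟫`. -/
theorem representer_theorem {𝒳 : Type*} [Nonempty 𝒳]
    {H : Type*} [NormedAddCommGroup H] [InnerProductSpace ℝ H] [CompleteSpace H]
    (Φ : 𝒳 → H) (k : 𝒳 → 𝒳 → ℝ) (hk : ∀ x y, k x y = ⟪Φ x, Φ y⟫)
    (hdense : Dense (Submodule.span ℝ (Set.range Φ) : Set H))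
    (N : ℕ) (hN : 0 < N) (x : Fin N → 𝒳)
    (L : (Fin N → ℝ) → ℝ) (hL0 : ∀ v, 0 ≤ L v) (hLc : Continuous L)
    (hLsc : StrictConvexOn ℝ Set.univ L)
    (lam : ℝ) (hlam : 0 < lam) :
    ∃ f : H,
      (∀ g : H, L (fun n => ⟪f, Φ (x n)⟫) + lam * ‖f‖ ≤ L (fun n => ⟪g, Φ (x n)⟫) + lam * ‖g‖) ∧
      (∃ α : Fin N → ℝ, f = ∑ n, α n • Φ (x n)) ∧
      (∀ f' : H,
        (∀ g : H, L (fun n => ⟪f', Φ (x n)⟫) + lam * ‖f'‖ ≤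
          L (fun n => ⟪g, Φ (x n)⟫) + lam * ‖g‖) → f' = f) := by
  classical
  set J : H → ℝ := fun f => L (fun n => ⟪f, Φ (x n)⟫) + lam * ‖f‖ with hJ
  set V : Submodule ℝ H := Submodule.span ℝ (Set.range (fun n => Φ (x n))) with hV
  have hfinV : FiniteDimensional ℝ V := by
    apply FiniteDimensional.span_of_finite
    exact Set.finite_range _
  -- continuity of J
  have hJcont : Continuous J := by
    apply Continuous.add
    · exact hLc.comp (continuous_pi fun n => (continuous_id.inner continuous_const))
    · exact continuous_const.mul continuous_norm
  -- existence of a minimizer on V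
  have hR : ∀ v : H, J 0 < lam * ‖v‖ → J 0 < J v := by
    intro v hv
    calc J 0 < lam * ‖v‖ := hv
    _ ≤ J v := le_add_of_nonneg_left (hL0 _)
  set R : ℝ := (J 0 + 1) / lam with hRdef
  have hcomp : IsCompact (Metric.closedBall (0 : V) R) := isCompact_closedBall _ _
  have hJ00 : 0 ≤ J 0 := add_nonneg (hL0 _) (by positivity)
  have h0mem : (0 : V) ∈ Metric.closedBall (0 : V) R := by
    simp only [Metric.mem_closedBall, dist_self]
    positivity
  obtain ⟨f₀, hf₀mem, hf₀min⟩ := hcomp.exists_isMinOn ⟨0, h0mem⟩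
    ((hJcont.comp continuous_subtype_val).continuousOn)
  -- f₀ minimizes J over all of V
  have hminV : ∀ v : V, J f₀ ≤ J v := by
    intro v
    by_cases hvb : v ∈ Metric.closedBall (0 : V) R
    · exact hf₀min hvb
    · have hnorm : R < ‖v‖ := by
        simpa [Metric.mem_closedBall, dist_zero_right] using hvb
      have : J 0 < J (v : H) := by
        apply hR
        have : J 0 + 1 ≤ lam * ‖v‖ := by
          rw [hRdef] at hnorm
          calc J 0 + 1 = lam * ((J 0 + 1)/lam) := by field_simp
          _ ≤ lam * ‖(v:H)‖ := by
            apply mul_le_mul_of_nonneg_left _ hlam.le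
            simpa using hnorm.le
        have hcv : ‖(v : H)‖ = ‖v‖ := rfl
        rw [hcv]
        linarith
      have h0 : J f₀ ≤ J (0 : V) := hf₀min h0mem
      simp only [ZeroMemClass.coe_zero] at h0
      linarith [h0, this]
  -- key: projection onto V doesn't increase J
  have hPhimem : ∀ n, Φ (x n) ∈ V := fun n =>
    Submodule.subset_span ⟨n, rfl⟩
  have hproj : ∀ g : H, ∀ n, ⟪g, Φ (x n)⟫ = ⟪(Submodule.orthogonalProjectionOnto V g : H), Φ (x n)⟫ := by
    intro g n
    have h1 : g - Submodule.orthogonalProjectionOnto V g ∈ Vᗮ := V.sub_starProjection_mem_orthogonal g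
    have h2 : ⟪g - (Submodule.orthogonalProjectionOnto V g : H), Φ (x n)⟫ = 0 := by
      rw [real_inner_comm]
      exact h1 _ (hPhimem n)
    rw [inner_sub_left] at h2
    linarith
  have hprojnorm : ∀ g : H, ‖(Submodule.orthogonalProjectionOnto V g : H)‖ ≤ ‖g‖ := by
    intro g
    calc ‖(Submodule.orthogonalProjectionOnto V g : H)‖ ≤ ‖Submodule.orthogonalProjectionOnto V‖ * ‖g‖ :=
      (Submodule.orthogonalProjectionOnto V).le_opNorm g
    _ ≤ 1 * ‖g‖ := by
      apply mul_le_mul_of_nonneg_right (Submodule.orthogonalProjectionOnto_norm_le V) (norm_nonneg g)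
    _ = ‖g‖ := one_mul _
  have hglobal : ∀ g : H, J f₀ ≤ J g := by
    intro g
    calc J f₀ ≤ J (Submodule.orthogonalProjectionOnto V g : H) := hminV _
    _ ≤ J g := by
      simp only [hJ]
      have : (fun n => ⟪(Submodule.orthogonalProjectionOnto V g : H), Φ (x n)⟫) = fun n => ⟪g, Φ (x n)⟫ := by
        funext n; exact (hproj g n).symm
      rw [this]
      have := hprojnorm g
      nlinarith
  refine ⟨(f₀ : H), hglobal, ?_, ?_⟩
  · obtain ⟨α, hα⟩ := (Submodule.mem_span_range_iff_exists_fun ℝ).mp f₀.2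
    exact ⟨α, hα.symm⟩
  · -- uniqueness
    intro f' hf'
    by_contra hne
    have hJeq : J f' = J f₀ := le_antisymm (hf' f₀) (hglobal f')
    set m : H := (1/2 : ℝ) • (f' + (f₀ : H)) with hm
    have hinnm : ∀ n, ⟪m, Φ (x n)⟫ = (1/2 : ℝ) * ⟪f', Φ (x n)⟫ + (1/2 : ℝ) * ⟪(f₀ : H), Φ (x n)⟫ := by
      intro n
      simp [hm, inner_smul_left, inner_add_left]
    have hnm : ‖m‖ ≤ (1/2 : ℝ) * ‖f'‖ + (1/2 : ℝ) * ‖(f₀ : H)‖ := by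
      have h := norm_add_le f' (f₀ : H)
      have he : ‖m‖ = (1/2 : ℝ) * ‖f' + (f₀ : H)‖ := by
        rw [hm, norm_smul]; norm_num
      rw [he]; linarith
    by_cases hAf : (fun n => ⟪f', Φ (x n)⟫) = (fun n => ⟪(f₀ : H), Φ (x n)⟫)
    · -- same data, so same L values, so equal norms; strict convexity of norm gives contradiction
      have hLeq : L (fun n => ⟪f', Φ (x n)⟫) = L (fun n => ⟪(f₀ : H), Φ (x n)⟫) := by rw [hAf]
      have hnormeq : ‖f'‖ = ‖(f₀ : H)‖ := by
        have := hJeq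
        simp only [hJ] at this
        rw [hLeq] at this
        have := add_left_cancel this
        exact mul_left_cancel₀ hlam.ne' this
      have hlt : ‖m‖ < ‖f'‖ := by
        rw [hm]
        exact (norm_midpoint_lt_iff hnormeq).mpr hne
      have hJm : J m < J f' := by
        simp only [hJ]
        have : (fun n => ⟪m, Φ (x n)⟫) = fun n => ⟪f', Φ (x n)⟫ := by
          funext n
          rw [hinnm n, congrFun hAf n]
          ring
        rw [this]
        have := mul_lt_mul_of_pos_left hlt hlam
        linarith
      have := hf' m
      simp only [hJ] at this hJm
      linarith
    · -- different data: strict convexity of L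
      have hLlt : L (fun n => ⟪m, Φ (x n)⟫) <
          (1/2 : ℝ) * L (fun n => ⟪f', Φ (x n)⟫) + (1/2 : ℝ) * L (fun n => ⟪(f₀:H), Φ (x n)⟫) := by
        have := hLsc.2 (Set.mem_univ (fun n => ⟪f', Φ (x n)⟫))
          (Set.mem_univ (fun n => ⟪(f₀:H), Φ (x n)⟫)) hAf
          (by norm_num : (0:ℝ) < 1/2) (by norm_num : (0:ℝ) < 1/2) (by norm_num)
        convert this using 2
        · rfl
        funext n
        rw [hinnm n]
        simp [Pi.smul_apply, smul_eq_mul]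
        · rfl
        · rfl
      have hJm : J m < J f' := by
        simp only [hJ]
        have h1 : J f' = J f₀ := hJeq
        simp only [hJ] at h1
        nlinarith
      have := hf' m
      simp only [hJ] at this hJm
      linarith
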